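/- Let p* be a PMF on the grid [n1] × [n2] and let Y be the count matrix of N i.i.d. observations from p*. Then the empirical frequency matrix Y/N satisfies E[ h²(p*, Y/N) ] ≤ n1 n2 / N, where h²(p, q) = Σ_{i,j} (√p_{ij} − √q_{ij})². -/

import Mathlib

open scoped Classical

open Finset

/-- Product measure moment lemma: expectation of a product over distinct coordinates. -/
private lemma moment_lemma {N : ℕ} {α : Type*} [Fintype α] (P X : α → ℝ)
    (hP : ∑ a, P a = 1) (S : Finset (Fin N)) :
    ∑ z : Fin N → α, (∏ k, P (z k)) * ∏ k ∈ S, X (z k)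
      = (∑ a, P a * X a) ^ S.card := by
  have h1 : ∀ z : Fin N → α,
      (∏ k, P (z k)) * ∏ k ∈ S, X (z k)
        = ∏ k, (P (z k) * (if k ∈ S then X (z k) else 1)) := by
    intro z
    rw [Finset.prod_mul_distrib]
    congr 1
    exact (Fintype.prod_ite_mem S fun k => X (z k)).symm
  simp only [h1]
  rw [← Fintype.prod_sum (fun k a => P a * (if k ∈ S then X a else 1))]
  have h2 : ∀ k : Fin N, (∑ a, P a * (if k ∈ S then X a else 1))
      = if k ∈ S then (∑ a, P a * X a) else 1 := by
    intro k
    split_ifs with h <;> simp [hP]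
  simp only [h2]
  rw [Fintype.prod_ite_mem, Finset.prod_const]

private lemma sqrt_sq_ineq {q r : ℝ} (hq : 0 ≤ q) (hr : 0 ≤ r) :
    q * (Real.sqrt q - Real.sqrt r) ^ 2 ≤ (q - r) ^ 2 := by
  have h1 := Real.sq_sqrt hq
  have h2 := Real.sq_sqrt hr
  have h3 := Real.sqrt_nonneg q
  have h4 := Real.sqrt_nonneg r
  nlinarith [sq_nonneg (Real.sqrt q - Real.sqrt r), sq_nonneg (Real.sqrt q + Real.sqrt r),
    mul_nonneg (sq_nonneg (Real.sqrt q - Real.sqrt r))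
      (show (0:ℝ) ≤ 2 * Real.sqrt q * Real.sqrt r + Real.sqrt r ^ 2 by positivity)]

theorem empirical_hellinger_rate {n₁ n₂ N : ℕ} (hN : 0 < N)
    (p : Fin n₁ → Fin n₂ → ℝ) (hp : ∀ i j, 0 ≤ p i j) (hsum : ∑ i, ∑ j, p i j = 1) :
    ∑ z : Fin N → Fin n₁ × Fin n₂,
        (∏ k, p (z k).1 (z k).2) *
          ∑ i, ∑ j,
            (Real.sqrt (p i j) -
              Real.sqrt (((Finset.univ.filter fun k => z k = (i, j)).card : ℝ) / N)) ^ 2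
      ≤ (n₁ * n₂ : ℝ) / N := by
  set α := Fin n₁ × Fin n₂
  set P : α → ℝ := fun a => p a.1 a.2 with hPdef
  have hPnn : ∀ a, 0 ≤ P a := fun a => hp a.1 a.2
  have hPsum : ∑ a, P a = 1 := by
    rw [Fintype.sum_prod_type]; exact hsum
  set w : (Fin N → α) → ℝ := fun z => ∏ k, P (z k) with hwdef
  have hwnn : ∀ z, 0 ≤ w z := fun z => Finset.prod_nonneg fun k _ => hPnn _
  -- reorganize the sum
  have hswap : ∑ z : Fin N → α,
        w z * ∑ i, ∑ j,
            (Real.sqrt (p i j) -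
              Real.sqrt (((Finset.univ.filter fun k => z k = (i, j)).card : ℝ) / N)) ^ 2
      = ∑ i, ∑ j, ∑ z : Fin N → α,
          w z * (Real.sqrt (p i j) -
              Real.sqrt (((Finset.univ.filter fun k => z k = (i, j)).card : ℝ) / N)) ^ 2 := by
    simp_rw [Finset.mul_sum]
    rw [Finset.sum_comm]
    exact Finset.sum_congr rfl fun i _ => Finset.sum_comm
  rw [show (fun z : Fin N → α => ∏ k, p (z k).1 (z k).2) = w from rfl] at *
  rw [hswap]
  -- bound each (i,j) term by 1/N
  have key : ∀ (i : Fin n₁) (j : Fin n₂),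
      ∑ z : Fin N → α,
          w z * (Real.sqrt (p i j) -
              Real.sqrt (((Finset.univ.filter fun k => z k = (i, j)).card : ℝ) / N)) ^ 2
        ≤ 1 / N := by
    intro i j
    set q : ℝ := p i j with hqdef
    have hq0 : 0 ≤ q := hp i j
    set X : α → ℝ := fun a => if a = (i, j) then 1 else 0 with hXdef
    have hXnn : ∀ a, 0 ≤ X a := by intro a; simp only [hXdef]; split_ifs <;> norm_num
    have hXsq : ∀ a, X a * X a = X a := by
      intro a; simp only [hXdef]; split_ifs <;> ring
    have hPX : ∑ a, P a * X a = q := by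
      simp only [hXdef, mul_ite, mul_one, mul_zero]
      rw [Finset.sum_ite_eq' Finset.univ ((i, j) : α) P]
      simp [hPdef, hqdef]
    set c : (Fin N → α) → ℝ := fun z => ((Finset.univ.filter fun k => z k = (i, j)).card : ℝ)
      with hcdef
    have hc : ∀ z, c z = ∑ k, X (z k) := by
      intro z
      simp only [hcdef, hXdef, Finset.card_filter]
      push_cast
      exact Finset.sum_congr rfl fun k _ => by split_ifs <;> norm_num
    have hcnn : ∀ z, 0 ≤ c z := fun z => Nat.cast_nonneg _
    -- moments
    have E0 : ∑ z : Fin N → α, w z = 1 := by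
      have := moment_lemma P X hPsum (∅ : Finset (Fin N))
      simpa using this
    have E1 : ∀ k : Fin N, ∑ z : Fin N → α, w z * X (z k) = q := by
      intro k
      have := moment_lemma P X hPsum ({k} : Finset (Fin N))
      simpa [hPX] using this
    have E2 : ∀ k l : Fin N, k ≠ l →
        ∑ z : Fin N → α, w z * (X (z k) * X (z l)) = q ^ 2 := by
      intro k l hkl
      have := moment_lemma P X hPsum ({k, l} : Finset (Fin N))
      rw [Finset.card_insert_of_notMem (by simpa using hkl), Finset.card_singleton] at this
      simpa [Finset.prod_pair hkl, hPX] using this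
    have Ec : ∑ z : Fin N → α, w z * c z = N * q := by
      simp_rw [hc, Finset.mul_sum]
      rw [Finset.sum_comm]
      simp [E1, Finset.sum_const]
    have Ec2 : ∑ z : Fin N → α, w z * (c z * c z) = N * q + (N * (N - 1)) * q ^ 2 := by
      have : ∀ z, w z * (c z * c z) = ∑ k, ∑ l, w z * (X (z k) * X (z l)) := by
        intro z
        simp_rw [hc, Finset.sum_mul_sum, Finset.mul_sum]
      simp_rw [this]
      rw [Finset.sum_comm]
      have hinner : ∀ k : Fin N,
          ∑ z : Fin N → α, ∑ l, w z * (X (z k) * X (z l))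
            = q + ((N : ℝ) - 1) * q ^ 2 := by
        intro k
        rw [Finset.sum_comm]
        have : ∀ l : Fin N, ∑ z : Fin N → α, w z * (X (z k) * X (z l))
            = if l = k then q else q ^ 2 := by
          intro l
          split_ifs with h
          · subst h; simp_rw [hXsq]; exact E1 l
          · exact E2 k l (Ne.symm h)
        simp_rw [this]
        have h5 : ∀ l : Fin N, (if l = k then q else q ^ 2)
            = q ^ 2 + (if l = k then q - q ^ 2 else 0) := by
          intro l; split_ifs <;> ring
        simp_rw [h5]
        rw [Finset.sum_add_distrib, Finset.sum_const,
          Finset.sum_ite_eq' Finset.univ k (fun _ => q - q ^ 2)]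
        simp [Finset.card_univ]
        ring
      simp_rw [hinner]
      rw [Finset.sum_const]
      simp [Finset.card_univ]
      ring
    -- variance computation
    have hNpos : (0:ℝ) < N := by exact_mod_cast hN
    have Evar : ∑ z : Fin N → α, w z * (q - c z / N) ^ 2 = (q - q ^ 2) / N := by
      have expand : ∀ z : Fin N → α, w z * (q - c z / N) ^ 2
          = q ^ 2 * w z - (2 * q / N) * (w z * c z) + (1 / N ^ 2) * (w z * (c z * c z)) := by
        intro z; field_simp; ring
      simp_rw [expand]
      rw [Finset.sum_add_distrib, Finset.sum_sub_distrib, ← Finset.mul_sum, ← Finset.mul_sum,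
        ← Finset.mul_sum, E0, Ec, Ec2]
      field_simp
      ring
    by_cases hq : q = 0
    · -- all terms vanish
      have : ∀ z : Fin N → α,
          w z * (Real.sqrt q - Real.sqrt (c z / N)) ^ 2 = 0 := by
        intro z
        by_cases hcz : c z = 0
        · simp [hcz, hq]
        · have : ∃ k, z k = (i, j) := by
            by_contra hcon
            push_neg at hcon
            apply hcz
            simp only [hcdef]
            rw [Finset.filter_false_of_mem (fun k _ => hcon k)]
            simp
          obtain ⟨k, hk⟩ := this
          have : w z = 0 := by
            apply Finset.prod_eq_zero (Finset.mem_univ k)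
            rw [hk]
            simpa [hPdef] using hq
          simp [this]
      rw [show (fun z : Fin N → α =>
          w z * (Real.sqrt (p i j) -
            Real.sqrt (((Finset.univ.filter fun k => z k = (i, j)).card : ℝ) / N)) ^ 2)
          = fun z => w z * (Real.sqrt q - Real.sqrt (c z / N)) ^ 2 from rfl]
      rw [Finset.sum_congr rfl fun z _ => this z]
      simp
    · have hqpos : 0 < q := lt_of_le_of_ne hq0 (Ne.symm hq)
      calc ∑ z : Fin N → α,
            w z * (Real.sqrt q - Real.sqrt (c z / N)) ^ 2
          ≤ ∑ z : Fin N → α, w z * ((q - c z / N) ^ 2 / q) := by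
            apply Finset.sum_le_sum
            intro z _
            apply mul_le_mul_of_nonneg_left _ (hwnn z)
            rw [le_div_iff₀ hqpos, mul_comm]
            exact sqrt_sq_ineq hq0 (by positivity)
        _ = (∑ z : Fin N → α, w z * (q - c z / N) ^ 2) / q := by
            rw [Finset.sum_div]
            exact Finset.sum_congr rfl fun z _ => by ring
        _ = (q - q ^ 2) / N / q := by rw [Evar]
        _ = (1 - q) / N := by field_simp
        _ ≤ 1 / N := by
            gcongr
            linarith
  calc ∑ i, ∑ j, ∑ z : Fin N → α,
        w z * (Real.sqrt (p i j) -
            Real.sqrt (((Finset.univ.filter fun k => z k = (i, j)).card : ℝ) / N)) ^ 2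
      ≤ ∑ i : Fin n₁, ∑ j : Fin n₂, (1 / N : ℝ) := by
        apply Finset.sum_le_sum; intro i _
        apply Finset.sum_le_sum; intro j _
        exact key i j
    _ = (n₁ * n₂ : ℝ) / N := by
        simp [Finset.sum_const, Finset.card_univ]
        ring
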